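/- Let $n \geq 9$ and let $\delta \in A_n$ be a non-identity permutation fixing at least $3$ points and having no cycle of length $3$ in its cycle decomposition. Let $\delta' = (\alpha\,\beta\,\gamma)\delta$ where $\alpha, \beta, \gamma$ are points fixed by $\delta$. Then $|C_{A_n}(\delta')|$ divides $|C_{A_n}(\delta)|$, so $|\delta^{A_n}|$ divides $|\delta'^{A_n}|$, and $|(1\,2\,3)^{A_n}|$ divides $|\delta'^{A_n}|$; hence there is a path of length two in $D(A_n)$ between $v_\delta$ and the $3$-cycle vertex. -/

import Mathlib

/-- The size of the conjugacy class of `g` in `G`. -/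
noncomputable def clSize {G : Type*} [Group G] (g : G) : ℕ := Nat.card {x : G // IsConj g x}

lemma clSize_eq_of_isConj {G : Type*} [Group G] {a b : G} (h : IsConj a b) :
    clSize a = clSize b :=
  Nat.card_congr (Equiv.subtypeEquivRight fun _ => ⟨fun hax => h.symm.trans hax,
    fun hbx => h.trans hbx⟩)

lemma clSize_mul_card_centralizer {G : Type*} [Group G] (g : G) :
    clSize g * Nat.card (Subgroup.centralizer {g} : Subgroup G) = Nat.card G := by
  have e1 : {x : G // IsConj g x} ≃ MulAction.orbit (ConjAct G) g :=
    Equiv.subtypeEquivRight fun x => by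
      rw [ConjAct.mem_orbit_conjAct]; exact ⟨IsConj.symm, IsConj.symm⟩
  have hcomap := Subgroup.centralizer_eq_comap_stabilizer g
  have e2 : (Subgroup.centralizer {g} : Subgroup G) ≃
      MulAction.stabilizer (ConjAct G) g :=
    { toFun := fun x => ⟨ConjAct.toConjAct (x : G), by
        have hx := Subgroup.mem_centralizer_singleton_iff.mp x.2
        rw [MulAction.mem_stabilizer_iff, ConjAct.toConjAct_smul, hx, mul_assoc,
          mul_inv_cancel, mul_one]⟩
      invFun := fun y => ⟨ConjAct.ofConjAct (y : ConjAct G), by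
        have hy := MulAction.mem_stabilizer_iff.mp y.2
        rw [show (y : ConjAct G) = ConjAct.toConjAct (ConjAct.ofConjAct (y : ConjAct G)) by simp,
          ConjAct.toConjAct_smul] at hy
        rw [Subgroup.mem_centralizer_singleton_iff]
        exact mul_inv_eq_iff_eq_mul.mp hy⟩
      left_inv := fun x => by ext; simp
      right_inv := fun y => by ext; simp }
  calc clSize g * Nat.card (Subgroup.centralizer {g} : Subgroup G)
      = Nat.card (MulAction.orbit (ConjAct G) g) *
        Nat.card (MulAction.stabilizer (ConjAct G) g) := by
        rw [clSize, Nat.card_congr e1, Nat.card_congr e2]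
    _ = Nat.card (MulAction.orbit (ConjAct G) g × MulAction.stabilizer (ConjAct G) g) :=
        (Nat.card_prod _ _).symm
    _ = Nat.card (ConjAct G) := Nat.card_congr (MulAction.orbitProdStabilizerEquivGroup _ g)
    _ = Nat.card G := Nat.card_congr ConjAct.ofConjAct.toEquiv

lemma clSize_dvd_of_centralizer_le {G : Type*} [Group G] [Finite G] {a b : G}
    (h : Subgroup.centralizer {b} ≤ Subgroup.centralizer {a}) : clSize a ∣ clSize b := by
  obtain ⟨k, hk⟩ := Subgroup.card_dvd_of_le h
  have hpos : 0 < Nat.card (Subgroup.centralizer {b} : Subgroup G) := Nat.card_pos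
  refine ⟨k, ?_⟩
  have h1 := clSize_mul_card_centralizer a
  have h2 := clSize_mul_card_centralizer b
  rw [hk] at h1
  have heq : clSize b * Nat.card (Subgroup.centralizer {b} : Subgroup G) =
      clSize a * k * Nat.card (Subgroup.centralizer {b} : Subgroup G) := by
    rw [h2, ← h1]; ring
  exact Nat.eq_of_mul_eq_mul_right hpos heq

theorem statement_16 (n : ℕ) (hn : 9 ≤ n) (δ δ' : Equiv.Perm (Fin n))
    (hδA : δ ∈ alternatingGroup (Fin n)) (hδ1 : δ ≠ 1)
    (h3 : 3 ∉ δ.cycleType)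
    (α β γ : Fin n) (hab : α ≠ β) (hbc : β ≠ γ) (hac : α ≠ γ)
    (hα : δ α = α) (hβ : δ β = β) (hγ : δ γ = γ)
    (hδ'def : δ' = Equiv.swap α β * Equiv.swap β γ * δ)
    (hδ'A : δ' ∈ alternatingGroup (Fin n))
    (c : Equiv.Perm (Fin n)) (hcA : c ∈ alternatingGroup (Fin n))
    (hc : c.cycleType = {3}) :
    Nat.card (Subgroup.centralizer {(⟨δ', hδ'A⟩ : alternatingGroup (Fin n))} :
        Subgroup (alternatingGroup (Fin n))) ∣
      Nat.card (Subgroup.centralizer {(⟨δ, hδA⟩ : alternatingGroup (Fin n))} :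
        Subgroup (alternatingGroup (Fin n))) ∧
    clSize (⟨δ, hδA⟩ : alternatingGroup (Fin n)) ∣
      clSize (⟨δ', hδ'A⟩ : alternatingGroup (Fin n)) ∧
    clSize (⟨c, hcA⟩ : alternatingGroup (Fin n)) ∣
      clSize (⟨δ', hδ'A⟩ : alternatingGroup (Fin n)) := by
  classical
  set c0 : Equiv.Perm (Fin n) := Equiv.swap α β * Equiv.swap β γ with hc0def
  have hnodup : List.Nodup [α, β, γ] := by
    simp [hab, hbc, hac]
  have hsupp : c0.support = {α, β, γ} := Equiv.Perm.support_swap_mul_swap hnodup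
  have hc0 : c0.IsThreeCycle := by
    rw [← card_support_eq_three_iff, hsupp]
    rw [Finset.card_insert_of_notMem (by simp [hab, hac]),
      Finset.card_insert_of_notMem (by simp [hbc]), Finset.card_singleton]
  have hdisj : c0.Disjoint δ := by
    intro x
    by_cases hx : x ∈ c0.support
    · right
      rw [hsupp] at hx
      simp only [Finset.mem_insert, Finset.mem_singleton] at hx
      rcases hx with rfl | rfl | rfl <;> assumption
    · left; exact Equiv.Perm.notMem_support.mp hx
  have hδ'eq : δ' = c0 * δ := hδ'def
  have hct : δ'.cycleType = {3} + δ.cycleType := by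
    rw [hδ'eq, Equiv.Perm.Disjoint.cycleType_mul hdisj, hc0.cycleType]
  have hcount : δ'.cycleType.count 3 = 1 := by
    rw [hct, Multiset.count_add, Multiset.count_singleton_self,
      Multiset.count_eq_zero.mpr h3]
  have hc0mem : c0 ∈ δ'.cycleFactorsFinset := by
    rw [hδ'eq, Equiv.Perm.Disjoint.cycleFactorsFinset_mul_eq_union hdisj, Finset.mem_union]
    exact Or.inl (by rw [hc0.isCycle.cycleFactorsFinset_eq_singleton]; exact
      Finset.mem_singleton_self _)
  -- key: anything commuting with δ' commutes with c0 and δ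
  have key : ∀ g : Equiv.Perm (Fin n), g * δ' = δ' * g → g * c0 = c0 * g ∧ g * δ = δ * g := by
    intro g hg
    have hconj : g * δ' * g⁻¹ = δ' := by
      rw [hg, mul_assoc, mul_inv_cancel, mul_one]
    have hmem : g * c0 * g⁻¹ ∈ δ'.cycleFactorsFinset := by
      rw [← hconj]
      exact (Equiv.Perm.mem_cycleFactorsFinset_conj δ' g c0).mpr hc0mem
    have hcard : (g * c0 * g⁻¹).support.card = 3 := by
      rw [Equiv.Perm.card_support_conj]
      exact hc0.card_support
    have heqc : g * c0 * g⁻¹ = c0 := by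
      by_contra hne
      have hsub : ({g * c0 * g⁻¹, c0} : Finset (Equiv.Perm (Fin n))) ⊆
          δ'.cycleFactorsFinset := by
        intro x hx
        simp only [Finset.mem_insert, Finset.mem_singleton] at hx
        rcases hx with rfl | rfl
        exacts [hmem, hc0mem]
      have hle : ({g * c0 * g⁻¹, c0} : Finset (Equiv.Perm (Fin n))).val ≤
          δ'.cycleFactorsFinset.val := Finset.val_le_iff.mpr hsub
      have h2 : 2 ≤ Multiset.count 3 δ'.cycleType := by
        rw [Equiv.Perm.cycleType_def]
        have := Multiset.count_le_of_le 3
          (Multiset.map_le_map (f := Finset.card ∘ Equiv.Perm.support) hle)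
        refine le_trans ?_ this
        rw [show (({g * c0 * g⁻¹, c0} : Finset (Equiv.Perm (Fin n)))).val
            = (g * c0 * g⁻¹) ::ₘ ({c0} : Finset (Equiv.Perm (Fin n))).val from
          Finset.insert_val_of_notMem (by simpa using hne)]
        simp [hcard, hc0.card_support]
      omega
    have hgc : g * c0 = c0 * g := by
      have := heqc
      rw [mul_inv_eq_iff_eq_mul] at this
      exact this
    refine ⟨hgc, ?_⟩
    have hδconj : g * δ * g⁻¹ = δ := by
      have h1 : (g * c0 * g⁻¹) * (g * δ * g⁻¹) = c0 * δ := by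
        have : (g * c0 * g⁻¹) * (g * δ * g⁻¹) = g * (c0 * δ) * g⁻¹ := by group
        rw [this, ← hδ'eq, hconj, hδ'eq]
      rw [heqc] at h1
      exact mul_left_cancel h1
    rw [mul_inv_eq_iff_eq_mul] at hδconj
    exact hδconj
  have hc0A : c0 ∈ alternatingGroup (Fin n) := hc0.mem_alternatingGroup
  have hle1 : Subgroup.centralizer {(⟨δ', hδ'A⟩ : alternatingGroup (Fin n))} ≤
      Subgroup.centralizer {(⟨δ, hδA⟩ : alternatingGroup (Fin n))} := by
    intro x hx
    rw [Subgroup.mem_centralizer_singleton_iff] at hx ⊢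
    have hx' : (x : Equiv.Perm (Fin n)) * δ' = δ' * (x : Equiv.Perm (Fin n)) := by
      have := congrArg Subtype.val hx
      simpa using this
    exact Subtype.ext (by simpa using (key _ hx').2)
  have hle2 : Subgroup.centralizer {(⟨δ', hδ'A⟩ : alternatingGroup (Fin n))} ≤
      Subgroup.centralizer {(⟨c0, hc0A⟩ : alternatingGroup (Fin n))} := by
    intro x hx
    rw [Subgroup.mem_centralizer_singleton_iff] at hx ⊢
    have hx' : (x : Equiv.Perm (Fin n)) * δ' = δ' * (x : Equiv.Perm (Fin n)) := by
      have := congrArg Subtype.val hx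
      simpa using this
    exact Subtype.ext (by simpa using (key _ hx').1)
  refine ⟨Subgroup.card_dvd_of_le hle1, clSize_dvd_of_centralizer_le hle1, ?_⟩
  have h5 : 5 ≤ Fintype.card (Fin n) := by
    rw [Fintype.card_fin]; omega
  have hconjc : IsConj (⟨c, hcA⟩ : alternatingGroup (Fin n))
      (⟨c0, hc0A⟩ : alternatingGroup (Fin n)) :=
    alternatingGroup.isThreeCycle_isConj (by rwa [Nat.card_eq_fintype_card]) hc hc0
  rw [clSize_eq_of_isConj hconjc]
  exact clSize_dvd_of_centralizer_le hle2
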